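/- arXiv:1611.02093 — 2 statements merged into one kernel-verified Lean document; each statement's English description precedes it below -/
import Mathlib

section
/- Let H be an n×n real symmetric matrix and u, v two indices, and suppose perfect state transfer occurs from u to v at some time T ∈ ℝ. Call a real number λ a symmetric eigenvalue if H has a real eigenvector x with eigenvalue λ satisfying x(u) = x(v) ≠ 0, and an antisymmetric eigenvalue if H has a real eigenvector y with eigenvalue μ satisfying y(u) = −y(v) ≠ 0. Then for all symmetric eigenvalues λ, λ', λ'', λ''' with λ'' ≠ λ''' and every antisymmetric eigenvalue μ: (λ − λ')/(λ'' − λ''') is rational, and (λ − μ)/(λ'' − λ''') can be written as a/b with a an odd integer and b a nonzero even integer. -/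
open Matrix

lemma exp_mulVec_aux {n : ℕ} (A : Matrix (Fin n) (Fin n) ℂ) (x : Fin n → ℂ) (c : ℂ)
    (h : A *ᵥ x = c • x) :
    NormedSpace.exp A *ᵥ x = Complex.exp c • x := by
  letI : SeminormedRing (Matrix (Fin n) (Fin n) ℂ) := Matrix.linftyOpSemiNormedRing
  letI : NormedRing (Matrix (Fin n) (Fin n) ℂ) := Matrix.linftyOpNormedRing
  letI : NormedAlgebra ℂ (Matrix (Fin n) (Fin n) ℂ) := Matrix.linftyOpNormedAlgebra
  have hpow : ∀ k : ℕ, A ^ k *ᵥ x = c ^ k • x := by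
    intro k
    induction k with
    | zero => simp
    | succ k ih =>
      rw [pow_succ', ← Matrix.mulVec_mulVec, ih, Matrix.mulVec_smul, h, smul_smul, pow_succ]
  let L : Matrix (Fin n) (Fin n) ℂ →ₗ[ℂ] (Fin n → ℂ) :=
    { toFun := fun M => M *ᵥ x
      map_add' := fun M N => Matrix.add_mulVec M N x
      map_smul' := fun a M => Matrix.smul_mulVec a M x }
  let Lc : Matrix (Fin n) (Fin n) ℂ →L[ℂ] (Fin n → ℂ) := LinearMap.toContinuousLinearMap L
  have hL : ∀ M, Lc M = M *ᵥ x := fun M => rfl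
  have hsum := NormedSpace.expSeries_summable' (𝕂 := ℂ) A
  calc NormedSpace.exp A *ᵥ x
      = Lc (∑' (k : ℕ), ((Nat.factorial k : ℂ)⁻¹) • A ^ k) := by
        rw [hL, NormedSpace.exp_eq_tsum (𝕂 := ℂ)]
    _ = ∑' (k : ℕ), ((Nat.factorial k : ℂ)⁻¹) • (A ^ k *ᵥ x) := by
        rw [Lc.map_tsum hsum]
        simp only [hL]
        simp_rw [Matrix.smul_mulVec]
    _ = ∑' (k : ℕ), (((Nat.factorial k : ℂ)⁻¹) * c ^ k) • x := by
        simp_rw [hpow, smul_smul]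
    _ = (∑' (k : ℕ), ((Nat.factorial k : ℂ)⁻¹) * c ^ k) • x := by
        rw [Summable.tsum_smul_const]
        simpa using NormedSpace.expSeries_summable' (𝕂 := ℂ) c
    _ = Complex.exp c • x := by
        rw [Complex.exp_eq_exp_ℂ, NormedSpace.exp_eq_tsum (𝕂 := ℂ)]
        simp_rw [smul_eq_mul]

/-- Adjacency matrix of the path on `n` vertices. -/
def pathAdj (n : ℕ) : Matrix (Fin n) (Fin n) ℝ :=
  Matrix.of fun j k => if (j : ℕ) + 1 = (k : ℕ) ∨ (k : ℕ) + 1 = (j : ℕ) then 1 else 0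

/-- Hamiltonian of the path on `n` vertices with potential `q`. -/
def pathHam (n : ℕ) (q : Fin n → ℝ) : Matrix (Fin n) (Fin n) ℝ :=
  pathAdj n + Matrix.diagonal q

/-- Perfect state transfer from `u` to `v` at time `T` for real Hamiltonian `H`. -/
noncomputable def pst {ι : Type*} [Fintype ι] [DecidableEq ι]
    (H : Matrix ι ι ℝ) (u v : ι) (T : ℝ) : Prop :=
  ‖(NormedSpace.exp ((Complex.I * (T : ℂ)) • H.map (Complex.ofReal)) u v)‖ = 1

/-- ratio conditions on the eigenvalues implied by perfect state transfer. -/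
theorem eigenvalue_ratio_conditions_of_pst (n : ℕ) (H : Matrix (Fin n) (Fin n) ℝ)
    (hH : H.IsSymm) (u v : Fin n) (huv : u ≠ v) (T : ℝ) (hpst : pst H u v T)
    (lam lam' lam'' lam''' mu : ℝ)
    (h1 : ∃ x : Fin n → ℝ, H.mulVec x = lam • x ∧ x u = x v ∧ x u ≠ 0)
    (h2 : ∃ x : Fin n → ℝ, H.mulVec x = lam' • x ∧ x u = x v ∧ x u ≠ 0)
    (h3 : ∃ x : Fin n → ℝ, H.mulVec x = lam'' • x ∧ x u = x v ∧ x u ≠ 0)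
    (h4 : ∃ x : Fin n → ℝ, H.mulVec x = lam''' • x ∧ x u = x v ∧ x u ≠ 0)
    (hne : lam'' ≠ lam''')
    (hmu : ∃ y : Fin n → ℝ, H.mulVec y = mu • y ∧ y u = - y v ∧ y u ≠ 0) :
    (∃ r : ℚ, (lam - lam') / (lam'' - lam''') = (r : ℝ)) ∧
    (∃ a b : ℤ, Odd a ∧ Even b ∧ b ≠ 0 ∧
      (lam - mu) / (lam'' - lam''') = (a : ℝ) / (b : ℝ)) := by
  set Hc : Matrix (Fin n) (Fin n) ℂ := H.map Complex.ofReal with hHc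
  set A : Matrix (Fin n) (Fin n) ℂ := (Complex.I * (T : ℂ)) • Hc with hA
  set U : Matrix (Fin n) (Fin n) ℂ := NormedSpace.exp A with hU
  have habs : ‖U u v‖ = 1 := hpst
  -- A is skew-Hermitian
  have hHerm : Hcᴴ = Hc := by
    ext i j
    simp only [conjTranspose_apply, hHc, Matrix.map_apply, Complex.star_def,
      Complex.conj_ofReal, Complex.ofReal_inj]
    exact congrFun (congrFun hH i) j
  have hAH : Aᴴ = -A := by
    rw [hA, conjTranspose_smul, hHerm, ← neg_smul]
    congr 1
    simp only [Complex.star_def, RingHom.map_mul, Complex.conj_I, Complex.conj_ofReal]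
    ring
  -- U is unitary: U * Uᴴ = 1
  have hUU : U * Uᴴ = 1 := by
    rw [hU, ← Matrix.exp_conjTranspose, hAH, ← Matrix.exp_add_of_commute A (-A)
      ((Commute.refl A).neg_right), add_neg_cancel, NormedSpace.exp_zero]
  -- row u of U vanishes off v
  have hrow : ∑ k, Complex.normSq (U u k) = 1 := by
    have h0 := congrFun (congrFun hUU u) u
    rw [Matrix.mul_apply] at h0
    simp only [conjTranspose_apply, Matrix.one_apply_eq] at h0
    have h0' : ∑ k, (Complex.normSq (U u k) : ℂ) = 1 := by
      simpa [Complex.mul_conj] using h0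
    exact_mod_cast h0'
  have hveq : Complex.normSq (U u v) = 1 := by
    have := Complex.sq_norm (U u v)
    rw [habs] at this
    simpa using this.symm
  have hzero : ∀ k, k ≠ v → U u k = 0 := by
    intro k hk
    have hsplit := Finset.sum_erase_add Finset.univ
      (fun j => Complex.normSq (U u j)) (Finset.mem_univ v)
    rw [hrow] at hsplit
    have hrest : ∑ j ∈ Finset.univ.erase v, Complex.normSq (U u j) = 0 := by
      linarith [hveq]
    have := (Finset.sum_eq_zero_iff_of_nonneg
      (fun i _ => Complex.normSq_nonneg (U u i))).mp hrest k (by simp [hk])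
    exact Complex.normSq_eq_zero.mp this
  -- key relation for eigenvectors
  have keyrel : ∀ (c : ℝ) (x : Fin n → ℝ), H.mulVec x = c • x →
      Complex.exp (Complex.I * T * c) * (x u : ℂ) = U u v * (x v : ℂ) := by
    intro c x hx
    set xc : Fin n → ℂ := fun i => (x i : ℂ) with hxc
    have hHx : Hc *ᵥ xc = (c : ℂ) • xc := by
      ext i
      have := congrFun hx i
      simp only [Matrix.mulVec, dotProduct, Pi.smul_apply, smul_eq_mul] at this ⊢
      simp only [hHc, hxc, Matrix.map_apply]
      exact_mod_cast this
    have hAx : A *ᵥ xc = (Complex.I * T * c) • xc := by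
      rw [hA, Matrix.smul_mulVec, hHx, smul_smul]
    have hexp := exp_mulVec_aux A xc _ hAx
    have heval := congrFun hexp u
    have hlhs : (U *ᵥ xc) u = U u v * xc v := by
      simp only [Matrix.mulVec, dotProduct]
      exact Finset.sum_eq_single v (fun k _ hk => by rw [hzero k hk, zero_mul])
        (by simp)
    rw [hU] at hlhs ⊢
    rw [hlhs] at heval
    simp only [Pi.smul_apply, smul_eq_mul] at heval
    exact heval.symm
  set γ : ℂ := U u v with hγ
  -- eigenvalue relations
  have hsym : ∀ (c : ℝ), (∃ x : Fin n → ℝ, H.mulVec x = c • x ∧ x u = x v ∧ x u ≠ 0) →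
      Complex.exp (Complex.I * T * c) = γ := by
    rintro c ⟨x, hx, hxuv, hxu⟩
    have := keyrel c x hx
    rw [← hxuv] at this
    have hxu' : (x u : ℂ) ≠ 0 := Complex.ofReal_ne_zero.mpr hxu
    exact mul_right_cancel₀ hxu' this
  have hasym : Complex.exp (Complex.I * T * mu) = -γ := by
    obtain ⟨y, hy, hyuv, hyu⟩ := hmu
    have := keyrel mu y hy
    have hyv : (y v : ℂ) = -(y u : ℂ) := by
      rw [show y v = - y u by linarith [hyuv]]; push_cast; ring
    rw [hyv] at this
    have hyu' : (y u : ℂ) ≠ 0 := Complex.ofReal_ne_zero.mpr hyu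
    have : Complex.exp (Complex.I * T * mu) * (y u : ℂ) = (-γ) * (y u : ℂ) := by
      rw [this]; ring
    exact mul_right_cancel₀ hyu' this
  have e1 := hsym lam h1
  have e2 := hsym lam' h2
  have e3 := hsym lam'' h3
  have e4 := hsym lam''' h4
  -- T ≠ 0
  have hT : T ≠ 0 := by
    intro hT0
    rw [hT0] at e1 hasym
    simp only [Complex.ofReal_zero, mul_zero, zero_mul, Complex.exp_zero] at e1 hasym
    rw [← e1] at hasym
    norm_num at hasym
  -- difference lemma
  have hdiff : ∀ a b : ℝ, Complex.exp (Complex.I * T * a) = Complex.exp (Complex.I * T * b) →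
      ∃ k : ℤ, T * (a - b) = 2 * Real.pi * k := by
    intro a b hab
    have h1' : Complex.exp (Complex.I * T * a - Complex.I * T * b) = 1 := by
      rw [Complex.exp_sub, hab, div_self (Complex.exp_ne_zero _)]
    rw [Complex.exp_eq_one_iff] at h1'
    obtain ⟨k, hk⟩ := h1'
    refine ⟨k, ?_⟩
    have h2' : (Complex.I) * ((T * (a - b)) : ℂ) = Complex.I * ((2 * Real.pi * k : ℝ) : ℂ) := by
      push_cast
      push_cast at hk
      linear_combination hk
    have := mul_left_cancel₀ Complex.I_ne_zero h2'
    exact_mod_cast this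
  obtain ⟨k, hk⟩ := hdiff lam lam' (by rw [e1, e2])
  obtain ⟨m, hm⟩ := hdiff lam'' lam''' (by rw [e3, e4])
  have hd : lam'' - lam''' ≠ 0 := sub_ne_zero.mpr hne
  have hm0 : (m : ℝ) ≠ 0 := by
    intro h0
    rw [h0] at hm
    simp only [mul_zero] at hm
    exact mul_ne_zero hT hd hm
  have hmz : m ≠ 0 := fun h => hm0 (by exact_mod_cast congrArg (Int.cast : ℤ → ℝ) h)
  constructor
  · refine ⟨(k : ℚ) / (m : ℚ), ?_⟩
    push_cast
    rw [div_eq_div_iff hd hm0]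
    have key : T * ((lam - lam') * m - (k : ℝ) * (lam'' - lam''')) = 0 := by
      linear_combination (m : ℝ) * hk - (k : ℝ) * hm
    have := (mul_eq_zero.mp key).resolve_left hT
    linarith
  · -- antisymmetric case
    have hγ0 : γ ≠ 0 := by
      intro h0
      rw [h0] at e1
      exact Complex.exp_ne_zero _ e1
    have hmu1 : Complex.exp (Complex.I * T * lam - Complex.I * T * mu) = -1 := by
      rw [Complex.exp_sub, e1, hasym, div_neg, div_self hγ0]
    have hone : Complex.exp ((Complex.I * T * lam - Complex.I * T * mu) +
        Real.pi * Complex.I) = 1 := by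
      rw [Complex.exp_add, hmu1, Complex.exp_pi_mul_I]
      ring
    rw [Complex.exp_eq_one_iff] at hone
    obtain ⟨j, hj⟩ := hone
    have hj' : T * (lam - mu) = (2 * j - 1) * Real.pi := by
      have h2' : (Complex.I) * ((T * (lam - mu)) : ℂ) =
          Complex.I * (((2 * (j : ℝ) - 1) * Real.pi : ℝ) : ℂ) := by
        push_cast
        push_cast at hj
        linear_combination hj
      have := mul_left_cancel₀ Complex.I_ne_zero h2'
      exact_mod_cast this
    refine ⟨2 * j - 1, 2 * m, ⟨j - 1, by ring⟩, ⟨m, by ring⟩, by omega, ?_⟩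
    have hb0 : (2 * (m : ℝ)) ≠ 0 := mul_ne_zero two_ne_zero hm0
    push_cast
    rw [div_eq_div_iff hd hb0]
    have key : T * ((lam - mu) * (2 * m) - (2 * (j : ℝ) - 1) * (lam'' - lam''')) = 0 := by
      linear_combination (2 * (m : ℝ)) * hj' - (2 * (j : ℝ) - 1) * hm
    have := (mul_eq_zero.mp key).resolve_left hT
    linarith
end

section
/- For n ≥ 1 and real numbers Q_1,…,Q_n,Q_{n+1}, let L_{2n+1} = det(x·I_{2n+1} − H_{2n+1}) be the characteristic polynomial of the Hamiltonian H_{2n+1} of the path P_{2n+1} with symmetric potential (Q_1,…,Q_n,Q_{n+1},Q_n,…,Q_1). Then L_{2n+1} = p_n · (p_{n+1} − p_{n−1}), where p_k = p_k(x; Q_1,…,Q_k) for k ≤ n and p_{n+1} = p_{n+1}(x; Q_1,…,Q_n,Q_{n+1}). Moreover, the roots of p_{n+1} − p_{n−1} are eigenvalues of H_{2n+1} admitting eigenvectors f with f(1) = f(2n+1) ≠ 0, and the roots of p_n are eigenvalues admitting eigenvectors f with f(1) = −f(2n+1) ≠ 0. -/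
open Matrix

/-- `p_m(x; Q_1, …, Q_m) = det (x·I − H_m)`, the characteristic polynomial (evaluated at `x`)
of the Hamiltonian of the path on `m` vertices with potential `Q 0, …, Q (m-1)`. -/
noncomputable def pathCharFun (m : ℕ) (Q : ℕ → ℝ) (x : ℝ) : ℝ :=
  (x • (1 : Matrix (Fin m) (Fin m) ℝ) - pathHam m (fun i => Q i.val)).det

noncomputable def pM (m : ℕ) (q : ℕ → ℝ) (x : ℝ) : Matrix (Fin m) (Fin m) ℝ :=
  x • (1 : Matrix (Fin m) (Fin m) ℝ) - pathHam m (fun i => q i.val)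

lemma pM_apply (m : ℕ) (q : ℕ → ℝ) (x : ℝ) (j k : Fin m) :
    pM m q x j k = (if (j : ℕ) = (k : ℕ) then x - q j else 0) -
      (if (j : ℕ) + 1 = (k : ℕ) ∨ (k : ℕ) + 1 = (j : ℕ) then 1 else 0) := by
  simp only [pM, pathHam, pathAdj, Matrix.sub_apply, Matrix.add_apply, Matrix.smul_apply,
    Matrix.one_apply, Matrix.diagonal_apply, Matrix.of_apply, smul_eq_mul, ← Fin.val_eq_val]
  by_cases h : (j : ℕ) = (k : ℕ) <;> simp [h]

lemma pathCharFun_det (m : ℕ) (q : ℕ → ℝ) (x : ℝ) :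
    pathCharFun m q x = (pM m q x).det := rfl

lemma pathCharFun_congr (m : ℕ) (q q' : ℕ → ℝ) (x : ℝ) (h : ∀ i < m, q i = q' i) :
    pathCharFun m q x = pathCharFun m q' x := by
  rw [pathCharFun_det, pathCharFun_det]
  congr 1
  ext j k
  rw [pM_apply, pM_apply, h j j.isLt]

lemma pathCharFun_zero (q : ℕ → ℝ) (x : ℝ) : pathCharFun 0 q x = 1 := by
  rw [pathCharFun_det]; exact Matrix.det_fin_zero

lemma pathCharFun_one (q : ℕ → ℝ) (x : ℝ) : pathCharFun 1 q x = x - q 0 := by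
  rw [pathCharFun_det, Matrix.det_fin_one, pM_apply]
  norm_num

lemma pathCharFun_rev (m : ℕ) (q : ℕ → ℝ) (x : ℝ) :
    pathCharFun m (fun i => q (m - 1 - i)) x = pathCharFun m q x := by
  rw [pathCharFun_det, pathCharFun_det]
  rw [← Matrix.det_submatrix_equiv_self (Fin.revPerm) (pM m q x)]
  congr 1
  ext j k
  simp only [Matrix.submatrix_apply, pM_apply, Fin.revPerm_apply, Fin.val_rev]
  have hj := j.isLt
  have hk := k.isLt
  have hv : m - ((j:ℕ) + 1) = m - 1 - (j:ℕ) := by omega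
  have h1 : (m - ((j:ℕ)+1) = m - ((k:ℕ)+1)) ↔ ((j:ℕ) = (k:ℕ)) := by omega
  have h2 : (m - ((j:ℕ)+1) + 1 = m - ((k:ℕ)+1) ∨ m - ((k:ℕ)+1) + 1 = m - ((j:ℕ)+1)) ↔
      ((j:ℕ) + 1 = (k:ℕ) ∨ (k:ℕ) + 1 = (j:ℕ)) := by omega
  rw [if_congr h1 rfl rfl, if_congr h2 rfl rfl, hv]

lemma pM_submatrix_succ (m : ℕ) (q : ℕ → ℝ) (x : ℝ) :
    (pM (m+1) q x).submatrix Fin.succ Fin.succ = pM m (fun i => q (i+1)) x := by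
  ext j k
  simp only [Matrix.submatrix_apply, pM_apply, Fin.val_succ]
  have h1 : ((j:ℕ)+1 = (k:ℕ)+1) ↔ ((j:ℕ) = (k:ℕ)) := by omega
  have h2 : ((j:ℕ)+1+1 = (k:ℕ)+1 ∨ (k:ℕ)+1+1 = (j:ℕ)+1) ↔
      ((j:ℕ)+1 = (k:ℕ) ∨ (k:ℕ)+1 = (j:ℕ)) := by omega
  rw [if_congr h1 rfl rfl, if_congr h2 rfl rfl]

lemma pathCharFun_rec_head (m : ℕ) (q : ℕ → ℝ) (x : ℝ) :
    pathCharFun (m+2) q x =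
      (x - q 0) * pathCharFun (m+1) (fun i => q (i+1)) x
        - pathCharFun m (fun i => q (i+2)) x := by
  rw [pathCharFun_det]
  rw [show ((m+2 : ℕ)) = (m+1).succ from rfl, Matrix.det_succ_row_zero]
  rw [Fin.sum_univ_succ, Fin.sum_univ_succ]
  have hz : ∀ i : Fin m, (-1 : ℝ) ^ (((Fin.succ (Fin.succ i)) : Fin (m+2)) : ℕ) *
      pM (m+2) q x 0 (Fin.succ (Fin.succ i)) *
      ((pM (m+2) q x).submatrix Fin.succ (Fin.succ (Fin.succ i)).succAbove).det = 0 := by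
    intro i
    have : pM (m+2) q x 0 (Fin.succ (Fin.succ i)) = 0 := by
      rw [pM_apply]
      simp only [Fin.val_zero, Fin.val_succ]
      simp only [show ¬ (0 = (i:ℕ)+1+1) by omega,
        show ¬ (0+1 = (i:ℕ)+1+1 ∨ (i:ℕ)+1+1+1 = 0) by omega, ↓reduceIte]
      ring
    rw [this]; ring
  rw [Finset.sum_eq_zero (fun i _ => hz i), add_zero]
  -- first term
  have e0 : pM (m+2) q x 0 0 = x - q 0 := by rw [pM_apply]; norm_num
  have e1 : pM (m+2) q x 0 (Fin.succ 0) = -1 := by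
    rw [pM_apply]; simp
  have s0 : ((pM (m+2) q x).submatrix Fin.succ ((0 : Fin (m+2)).succAbove)).det
      = pathCharFun (m+1) (fun i => q (i+1)) x := by
    rw [Fin.succAbove_zero, pM_submatrix_succ, pathCharFun_det]
  -- second term: expand along column zero
  have s1 : ((pM (m+2) q x).submatrix Fin.succ ((Fin.succ 0 : Fin (m+2)).succAbove)).det
      = - pathCharFun m (fun i => q (i+2)) x := by
    set B := (pM (m+2) q x).submatrix Fin.succ ((Fin.succ 0 : Fin (m+2)).succAbove) with hB
    rw [Matrix.det_succ_column_zero, Fin.sum_univ_succ]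
    have hz2 : ∀ i : Fin m, (-1 : ℝ) ^ (((Fin.succ i) : Fin (m+1)) : ℕ) *
        B (Fin.succ i) 0 * (B.submatrix (Fin.succ i).succAbove Fin.succ).det = 0 := by
      intro i
      have : B (Fin.succ i) 0 = 0 := by
        rw [hB]
        simp only [Matrix.submatrix_apply]
        rw [pM_apply]
        simp only [Fin.val_succ]
        rw [if_neg (by simp [Fin.succAbove, Fin.lt_def]),
          if_neg (by simp [Fin.succAbove, Fin.lt_def])]
        ring
      rw [this]; ring
    rw [Finset.sum_eq_zero (fun i _ => hz2 i), add_zero]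
    have b00 : B 0 0 = -1 := by
      rw [hB]
      simp only [Matrix.submatrix_apply]
      rw [pM_apply]
      simp [Fin.succAbove, Fin.lt_def]
    have bsub : B.submatrix ((0 : Fin (m+1)).succAbove) Fin.succ
        = pM m (fun i => q (i+2)) x := by
      ext j k
      rw [hB]
      simp only [Matrix.submatrix_apply, Fin.succAbove_zero]
      rw [pM_apply, pM_apply]
      have hcol : (((Fin.succ 0 : Fin (m+2)).succAbove (Fin.succ k)) : ℕ) = (k : ℕ) + 2 := by
        simp [Fin.succAbove, Fin.lt_def]
      simp only [Fin.val_succ, hcol]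
      have h1 : ((j:ℕ)+1+1 = (k:ℕ)+2) ↔ ((j:ℕ) = (k:ℕ)) := by omega
      have h2 : ((j:ℕ)+1+1+1 = (k:ℕ)+2 ∨ (k:ℕ)+2+1 = (j:ℕ)+1+1) ↔
          ((j:ℕ)+1 = (k:ℕ) ∨ (k:ℕ)+1 = (j:ℕ)) := by omega
      rw [if_congr h1 rfl rfl, if_congr h2 rfl rfl]
    rw [b00, bsub, ← pathCharFun_det]
    norm_num
  rw [e0, e1, s0, s1]
  norm_num [Fin.val_succ]
  ring

lemma pathCharFun_rec (m : ℕ) (q : ℕ → ℝ) (x : ℝ) :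
    pathCharFun (m+2) q x = (x - q (m+1)) * pathCharFun (m+1) q x - pathCharFun m q x := by
  have h1 : pathCharFun (m+2) q x = pathCharFun (m+2) (fun i => q (m+1-i)) x := by
    rw [← pathCharFun_rev (m+2) q x]
    exact (pathCharFun_congr _ _ _ _ (fun i hi => by congr 1 <;> omega)).symm
  rw [h1, pathCharFun_rec_head]
  have h2 : pathCharFun (m+1) (fun i => q (m+1-(i+1))) x = pathCharFun (m+1) q x := by
    rw [← pathCharFun_rev (m+1) q x]
    exact pathCharFun_congr _ _ _ _ (fun i hi => by congr 1 <;> omega)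
  have h3 : pathCharFun m (fun i => q (m+1-(i+2))) x = pathCharFun m q x := by
    rw [← pathCharFun_rev m q x]
    exact pathCharFun_congr _ _ _ _ (fun i hi => by congr 1 <;> omega)
  rw [h2, h3]
  norm_num

lemma pathCharFun_split (x : ℝ) (b : ℕ) : ∀ a (q : ℕ → ℝ),
    pathCharFun (a+b+2) q x =
      pathCharFun (a+1) q x * pathCharFun (b+1) (fun i => q (a+1+i)) x
        - pathCharFun a q x * pathCharFun b (fun i => q (a+2+i)) x := by
  have hrec : ∀ (m : ℕ) (q : ℕ → ℝ), pathCharFun (m+2) q x =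
      (x - q 0) * pathCharFun (m+1) (fun i => q (1+i)) x
        - pathCharFun m (fun i => q (2+i)) x := by
    intro m q
    rw [pathCharFun_rec_head,
      pathCharFun_congr (m+1) (fun i => q (i+1)) (fun i => q (1+i)) x
        (fun i hi => by beta_reduce; congr 1 <;> omega),
      pathCharFun_congr m (fun i => q (i+2)) (fun i => q (2+i)) x
        (fun i hi => by beta_reduce; congr 1 <;> omega)]
  have key : ∀ a, (∀ q : ℕ → ℝ,
      pathCharFun (a+b+2) q x =
        pathCharFun (a+1) q x * pathCharFun (b+1) (fun i => q (a+1+i)) x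
          - pathCharFun a q x * pathCharFun b (fun i => q (a+2+i)) x) ∧
      (∀ q : ℕ → ℝ,
      pathCharFun (a+1+b+2) q x =
        pathCharFun (a+2) q x * pathCharFun (b+1) (fun i => q (a+2+i)) x
          - pathCharFun (a+1) q x * pathCharFun b (fun i => q (a+3+i)) x) := by
    intro a
    induction a with
    | zero =>
      constructor
      · intro q
        rw [show (0+b+2 : ℕ) = b+2 by omega, hrec b q, pathCharFun_one, pathCharFun_zero]
        norm_num
      · intro q
        rw [show (0+1+b+2 : ℕ) = b+1+2 by omega, hrec (b+1) q, hrec b (fun i => q (1+i))]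
        have h2 : pathCharFun 2 q x = (x - q 0) * (x - q 1) - 1 := by
          rw [show (2:ℕ) = 0+2 from rfl, hrec 0 q, pathCharFun_one, pathCharFun_zero]
        rw [show (0+2 : ℕ) = 2 by omega, h2, pathCharFun_one]
        rw [pathCharFun_congr (b+1) (fun i => q (1+(1+i))) (fun i => q (0+2+i)) x
            (fun i hi => by beta_reduce; congr 1 <;> omega),
          pathCharFun_congr b (fun i => q (1+(2+i))) (fun i => q (0+3+i)) x
            (fun i hi => by beta_reduce; congr 1 <;> omega),
          pathCharFun_congr (b+1) (fun i => q (2+i)) (fun i => q (0+2+i)) x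
            (fun i hi => by beta_reduce; congr 1 <;> omega),
          show (1+0 : ℕ) = 1 from rfl]
        ring
    | succ n ih =>
      refine ⟨ih.2, ?_⟩
      intro q
      have e1 := hrec (n+b+2) q
      have e2 := ih.2 (fun i => q (1+i))
      have e3 := ih.1 (fun i => q (2+i))
      have e4 := hrec (n+1) q
      have e5 := hrec n q
      rw [pathCharFun_congr (b+1) (fun i => q (1+(n+1+1+i))) (fun i => q (n+1+2+i)) x
          (fun i hi => by beta_reduce; congr 1 <;> omega),
        pathCharFun_congr b (fun i => q (1+(n+1+2+i))) (fun i => q (n+1+3+i)) x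
          (fun i hi => by beta_reduce; congr 1 <;> omega)] at e2
      rw [pathCharFun_congr (b+1) (fun i => q (2+(n+1+i))) (fun i => q (n+1+2+i)) x
          (fun i hi => by beta_reduce; congr 1 <;> omega),
        pathCharFun_congr b (fun i => q (2+(n+2+i))) (fun i => q (n+1+3+i)) x
          (fun i hi => by beta_reduce; congr 1 <;> omega)] at e3
      rw [show (n+1+1+b+2 : ℕ) = n+b+2+2 by omega,
        show (n+1+1 : ℕ) = n+2 from rfl]
      rw [show (n+b+2+1 : ℕ) = n+1+b+2 by omega] at e1
      rw [e1, e2, e3, e4, e5]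
      ring
  exact fun a => (key a).1

lemma pathHam_mulVec (m : ℕ) (q : Fin m → ℝ) (f : Fin m → ℝ) (j : Fin m) :
    (pathHam m q).mulVec f j =
      (if h : (j : ℕ) + 1 < m then f ⟨(j:ℕ)+1, h⟩ else 0) +
      (if h : 0 < (j : ℕ) then f ⟨(j:ℕ)-1, by omega⟩ else 0) + q j * f j := by
  rw [pathHam, Matrix.add_mulVec, Pi.add_apply, Matrix.mulVec_diagonal]
  congr 1
  rw [Matrix.mulVec, dotProduct]
  have hsplit : ∀ k : Fin m, pathAdj m j k * f k =
      (if (j:ℕ)+1 = (k:ℕ) then f k else 0) + (if (k:ℕ)+1 = (j:ℕ) then f k else 0) := by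
    intro k
    rw [pathAdj, Matrix.of_apply]
    by_cases h1 : (j:ℕ)+1 = (k:ℕ) <;> by_cases h2 : (k:ℕ)+1 = (j:ℕ) <;>
      simp [h1, h2] <;> omega
  rw [Finset.sum_congr rfl (fun k _ => hsplit k), Finset.sum_add_distrib]
  congr 1
  · by_cases h : (j:ℕ)+1 < m
    · rw [dif_pos h]
      rw [Finset.sum_eq_single_of_mem (⟨(j:ℕ)+1, h⟩ : Fin m) (Finset.mem_univ _)
        (fun b _ hb => if_neg (fun hc => hb (Fin.ext hc.symm)))]
      rw [if_pos rfl]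
    · rw [dif_neg h]
      refine Finset.sum_eq_zero fun k _ => ?_
      rw [if_neg]
      have := k.isLt
      omega
  · by_cases h : 0 < (j:ℕ)
    · rw [dif_pos h]
      rw [Finset.sum_eq_single_of_mem (⟨(j:ℕ)-1, by omega⟩ : Fin m) (Finset.mem_univ _)
        (fun b _ hb => if_neg (fun hc => hb (Fin.ext (by simp only []; omega))))]
      rw [if_pos (by simp only []; omega)]
    · rw [dif_neg h]
      refine Finset.sum_eq_zero fun k _ => ?_
      rw [if_neg]
      omega

lemma eigen_helper (N : ℕ) (qv g : Fin N → ℝ) (lam : ℝ)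
    (hg : ∀ t (h : t < N),
      (if h1 : t+1 < N then g ⟨t+1, h1⟩ else 0) +
      (if h2 : 0 < t then g ⟨t-1, by omega⟩ else 0)
        + qv ⟨t, h⟩ * g ⟨t, h⟩ = lam * g ⟨t, h⟩) :
    (pathHam N qv).mulVec g = lam • g := by
  funext j
  rw [Pi.smul_apply, smul_eq_mul, pathHam_mulVec]
  exact hg j.val j.isLt

/-- factorization of the characteristic polynomial of the path `P_{2n+1}` with
symmetric potential `(Q₁,…,Qₙ,Q_{n+1},Qₙ,…,Q₁)`, together with the symmetry of the
eigenvectors corresponding to the roots of each factor. -/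
theorem odd_path_charpoly_factorization (n : ℕ) (hn : 1 ≤ n) (Q : ℕ → ℝ) :
    (∀ x : ℝ,
      (x • (1 : Matrix (Fin (2 * n + 1)) (Fin (2 * n + 1)) ℝ) -
          pathHam (2 * n + 1) (fun i => Q (min (i : ℕ) (2 * n - (i : ℕ))))).det =
        pathCharFun n Q x * (pathCharFun (n + 1) Q x - pathCharFun (n - 1) Q x)) ∧
    (∀ lam : ℝ, pathCharFun (n + 1) Q lam - pathCharFun (n - 1) Q lam = 0 →
      ∃ f : Fin (2 * n + 1) → ℝ,
        (pathHam (2 * n + 1) (fun i => Q (min (i : ℕ) (2 * n - (i : ℕ))))).mulVec f = lam • f ∧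
        f ⟨0, by omega⟩ = f ⟨2 * n, by omega⟩ ∧ f ⟨0, by omega⟩ ≠ 0) ∧
    (∀ lam : ℝ, pathCharFun n Q lam = 0 →
      ∃ f : Fin (2 * n + 1) → ℝ,
        (pathHam (2 * n + 1) (fun i => Q (min (i : ℕ) (2 * n - (i : ℕ))))).mulVec f = lam • f ∧
        f ⟨0, by omega⟩ = - f ⟨2 * n, by omega⟩ ∧ f ⟨0, by omega⟩ ≠ 0) := by
  obtain ⟨k, rfl⟩ : ∃ k, n = k + 1 := ⟨n - 1, by omega⟩
  refine ⟨?_, ?_, ?_⟩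
  · -- determinant factorization
    intro x
    have hsplit := pathCharFun_split x (k+1) k (fun i => Q (min i (2*(k+1) - i)))
    rw [show (k+(k+1)+2 : ℕ) = 2*(k+1)+1 by omega] at hsplit
    have c1 : pathCharFun (k+1) (fun i => Q (min i (2*(k+1) - i))) x
        = pathCharFun (k+1) Q x :=
      pathCharFun_congr _ _ _ _ (fun i hi => by beta_reduce; congr 1; omega)
    have c2 : pathCharFun k (fun i => Q (min i (2*(k+1) - i))) x
        = pathCharFun k Q x :=
      pathCharFun_congr _ _ _ _ (fun i hi => by beta_reduce; congr 1; omega)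
    have c3 : pathCharFun (k+1+1) (fun i => (fun i => Q (min i (2*(k+1) - i))) (k+1+i)) x
        = pathCharFun (k+2) Q x := by
      rw [pathCharFun_congr (k+1+1) _ (fun i => Q (k+2-1-i)) x
        (fun i hi => by beta_reduce; congr 1; omega)]
      exact pathCharFun_rev (k+2) Q x
    have c4 : pathCharFun (k+1) (fun i => (fun i => Q (min i (2*(k+1) - i))) (k+2+i)) x
        = pathCharFun (k+1) Q x := by
      rw [pathCharFun_congr (k+1) _ (fun i => Q (k+1-1-i)) x
        (fun i hi => by beta_reduce; congr 1; omega)]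
      exact pathCharFun_rev (k+1) Q x
    rw [c1, c2, c3, c4] at hsplit
    calc (x • (1 : Matrix (Fin (2 * (k+1) + 1)) (Fin (2 * (k+1) + 1)) ℝ) -
          pathHam (2 * (k+1) + 1) (fun i => Q (min (i : ℕ) (2 * (k+1) - (i : ℕ))))).det
        = pathCharFun (2*(k+1)+1) (fun i => Q (min i (2*(k+1) - i))) x := rfl
      _ = pathCharFun (k+1) Q x * pathCharFun (k+2) Q x
            - pathCharFun k Q x * pathCharFun (k+1) Q x := hsplit
      _ = pathCharFun (k+1) Q x * (pathCharFun (k+1+1) Q x - pathCharFun (k+1-1) Q x) := by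
          rw [show (k+1+1 : ℕ) = k+2 from rfl, show (k+1-1 : ℕ) = k from rfl]
          ring
  · -- symmetric eigenvectors
    intro lam hlam
    rw [show (k+1+1 : ℕ) = k+2 from rfl, show (k+1-1 : ℕ) = k from rfl] at hlam
    have p0 := pathCharFun_zero Q lam
    have p1 := pathCharFun_one Q lam
    have pr : ∀ m, pathCharFun (m+2) Q lam
        = (lam - Q (m+1)) * pathCharFun (m+1) Q lam - pathCharFun m Q lam :=
      fun m => pathCharFun_rec m Q lam
    refine ⟨fun j => pathCharFun (min (j:ℕ) (2*(k+1) - (j:ℕ))) Q lam,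
      eigen_helper _ _ _ lam ?_, ?_, ?_⟩
    · intro t ht
      beta_reduce
      simp only [Fin.val_mk]
      by_cases h0 : t = 0
      · subst h0
        rw [dif_pos (by omega), dif_neg (by omega)]
        rw [show min (0+1) (2*(k+1) - (0+1)) = 1 by omega,
          show min 0 (2*(k+1) - 0) = 0 by omega, p1, p0]
        ring
      by_cases hN : t = 2*(k+1)
      · subst hN
        rw [dif_neg (by omega), dif_pos (by omega)]
        rw [show min (2*(k+1)-1) (2*(k+1) - (2*(k+1)-1)) = 1 by omega,
          show min (2*(k+1)) (2*(k+1) - 2*(k+1)) = 0 by omega, p1, p0]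
        ring
      by_cases hmid : t = k+1
      · subst hmid
        rw [dif_pos (by omega), dif_pos (by omega),
          show min (k+1+1) (2*(k+1) - (k+1+1)) = k by omega,
          show min (k+1-1) (2*(k+1) - (k+1-1)) = k by omega,
          show min (k+1) (2*(k+1) - (k+1)) = k+1 by omega]
        linear_combination pr k - hlam
      by_cases hlt : t < k+1
      · rw [dif_pos (by omega), dif_pos (by omega),
          show min (t+1) (2*(k+1) - (t+1)) = t+1 by omega,
          show min (t-1) (2*(k+1) - (t-1)) = t-1 by omega,
          show min t (2*(k+1) - t) = t by omega]
        have hr := pr (t-1)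
        rw [show t-1+2 = t+1 by omega, show t-1+1 = t by omega] at hr
        linear_combination hr
      · rw [dif_pos (by omega), dif_pos (by omega),
          show min (t+1) (2*(k+1) - (t+1)) = 2*(k+1) - t - 1 by omega,
          show min (t-1) (2*(k+1) - (t-1)) = 2*(k+1) - t + 1 by omega,
          show min t (2*(k+1) - t) = 2*(k+1) - t by omega]
        have hr := pr (2*(k+1) - t - 1)
        rw [show 2*(k+1) - t - 1 + 2 = 2*(k+1) - t + 1 by omega,
          show 2*(k+1) - t - 1 + 1 = 2*(k+1) - t by omega] at hr
        linear_combination hr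
    · show pathCharFun (min 0 (2*(k+1) - 0)) Q lam
        = pathCharFun (min (2*(k+1)) (2*(k+1) - 2*(k+1))) Q lam
      rw [show min 0 (2*(k+1) - 0) = 0 by omega,
        show min (2*(k+1)) (2*(k+1) - 2*(k+1)) = 0 by omega]
    · show pathCharFun (min 0 (2*(k+1) - 0)) Q lam ≠ 0
      rw [show min 0 (2*(k+1) - 0) = 0 by omega, p0]
      norm_num
  · -- antisymmetric eigenvectors
    intro lam hlam
    have p0 := pathCharFun_zero Q lam
    have p1 := pathCharFun_one Q lam
    have pr : ∀ m, pathCharFun (m+2) Q lam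
        = (lam - Q (m+1)) * pathCharFun (m+1) Q lam - pathCharFun m Q lam :=
      fun m => pathCharFun_rec m Q lam
    refine ⟨fun j => if (j:ℕ) < k+1 then pathCharFun (j:ℕ) Q lam
        else -pathCharFun (2*(k+1) - (j:ℕ)) Q lam,
      eigen_helper _ _ _ lam ?_, ?_, ?_⟩
    · intro t ht
      beta_reduce
      simp only [Fin.val_mk]
      by_cases h0 : t = 0
      · subst h0
        rw [dif_pos (by omega), dif_neg (by omega), if_pos (show (0:ℕ) < k+1 by omega)]
        have e : (if 0+1 < k+1 then pathCharFun (0+1) Q lam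
            else -pathCharFun (2*(k+1) - (0+1)) Q lam) = pathCharFun 1 Q lam := by
          by_cases hk : 0+1 < k+1
          · rw [if_pos hk]
          · rw [if_neg hk, show 2*(k+1) - (0+1) = k+1 by omega, hlam,
              show (1 : ℕ) = k+1 by omega, hlam]
            ring
        rw [e, show min 0 (2*(k+1) - 0) = 0 by omega, p1, p0]
        ring
      by_cases hN : t = 2*(k+1)
      · subst hN
        rw [dif_neg (by omega), dif_pos (by omega)]
        rw [if_neg (show ¬(2*(k+1)-1 < k+1) by omega),
          show 2*(k+1) - (2*(k+1)-1) = 1 by omega,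
          if_neg (show ¬(2*(k+1) < k+1) by omega),
          show 2*(k+1) - 2*(k+1) = 0 by omega,
          show min (2*(k+1)) 0 = 0 by omega, p0, p1]
        ring
      by_cases hmid : t = k+1
      · subst hmid
        rw [dif_pos (by omega), dif_pos (by omega)]
        rw [if_neg (show ¬(k+1+1 < k+1) by omega),
          show 2*(k+1) - (k+1+1) = k by omega,
          if_pos (show k+1-1 < k+1 by omega),
          if_neg (show ¬(k+1 < k+1) by omega),
          show 2*(k+1) - (k+1) = k+1 by omega,
          show (k+1-1 : ℕ) = k by omega, hlam]
        ring
      by_cases hlt : t < k+1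
      · rw [dif_pos (by omega), dif_pos (by omega)]
        have e : (if t+1 < k+1 then pathCharFun (t+1) Q lam
            else -pathCharFun (2*(k+1) - (t+1)) Q lam) = pathCharFun (t+1) Q lam := by
          by_cases hk : t+1 < k+1
          · rw [if_pos hk]
          · rw [if_neg hk, show 2*(k+1) - (t+1) = k+1 by omega, hlam,
              show t+1 = k+1 by omega, hlam]
            ring
        rw [e, if_pos (show t-1 < k+1 by omega), if_pos (show t < k+1 by omega),
          show min t (2*(k+1) - t) = t by omega]
        have hr := pr (t-1)
        rw [show t-1+2 = t+1 by omega, show t-1+1 = t by omega] at hr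
        linear_combination hr
      · rw [dif_pos (by omega), dif_pos (by omega)]
        rw [if_neg (show ¬(t+1 < k+1) by omega), if_neg (show ¬(t-1 < k+1) by omega),
          if_neg (show ¬(t < k+1) by omega),
          show 2*(k+1) - (t+1) = 2*(k+1) - t - 1 by omega,
          show 2*(k+1) - (t-1) = 2*(k+1) - t + 1 by omega,
          show min t (2*(k+1) - t) = 2*(k+1) - t by omega]
        have hr := pr (2*(k+1) - t - 1)
        rw [show 2*(k+1) - t - 1 + 2 = 2*(k+1) - t + 1 by omega,
          show 2*(k+1) - t - 1 + 1 = 2*(k+1) - t by omega] at hr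
        linear_combination -hr
    · show (if (0:ℕ) < k+1 then pathCharFun 0 Q lam else -pathCharFun (2*(k+1) - 0) Q lam)
        = -(if (2*(k+1):ℕ) < k+1 then pathCharFun (2*(k+1)) Q lam
            else -pathCharFun (2*(k+1) - 2*(k+1)) Q lam)
      rw [if_pos (by omega), if_neg (show ¬(2*(k+1) < k+1) by omega),
        show 2*(k+1) - 2*(k+1) = 0 by omega]
      ring
    · show (if (0:ℕ) < k+1 then pathCharFun 0 Q lam
          else -pathCharFun (2*(k+1) - 0) Q lam) ≠ 0
      rw [if_pos (by omega), p0]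
      norm_num
end
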